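/- (Proposition 3) For the compiled model M^λ built from M^R and M^H, set the costs of all robot and human-copy actions to 1, the costs of both flip actions to 0, the cost of each check disagreement action to P2 = 0, and the cost of each check agreement action to P1 > 2^{|F^R|+|F^H|}. If π^λ is a cost-optimal plan of M^λ under these costs, then the number of check disagreement actions in π^λ equals the maximal goal state divergence: |κ⁻(π^λ)| = GD↑(M^R, M^H). -/

import Mathlib

/-- A STRIPS-style action over fluent type `F`: positive/negative preconditions
and add/delete effects. -/
structure Act (F : Type) where
  prePos : Finset F
  preNeg : Finset F
  addE : Finset F
  delE : Finset F
deriving DecidableEq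

/-- A planning model `M = ⟨F, A, c, I, G⟩`. -/
structure PModel (F : Type) [DecidableEq F] where
  fluents : Finset F
  actions : Finset (Act F)
  cost : Act F → ℕ
  init : Finset F
  goal : Finset F

variable {F : Type} [DecidableEq F]

/-- Action `a` is executable in state `s`. -/
def execAct (s : Finset F) (a : Act F) : Prop :=
  a.prePos ⊆ s ∧ a.preNeg ∩ s = ∅

/-- Transition of one action. -/
def stepAct (s : Finset F) (a : Act F) : Finset F :=
  (s ∪ a.addE) \ a.delE

/-- Transition extended to action sequences. -/
def runSeq (s : Finset F) : List (Act F) → Finset F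
  | [] => s
  | a :: π => runSeq (stepAct s a) π

/-- The action sequence is executable in order from state `s`, using actions of `M`. -/
def ExecFrom (M : PModel F) : Finset F → List (Act F) → Prop
  | _, [] => True
  | s, a :: π => a ∈ M.actions ∧ execAct s a ∧ ExecFrom M (stepAct s a) π

/-- A plan for `M`: executable from the initial state and achieving the goal. -/
def IsPlan (M : PModel F) (π : List (Act F)) : Prop :=
  ExecFrom M M.init π ∧ M.goal ⊆ runSeq M.init π

/-- Cost of a plan. -/
def planCost (M : PModel F) (π : List (Act F)) : ℕ :=
  (π.map M.cost).sum

/-- Cost-optimal plan. -/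
def IsOptimal (M : PModel F) (π : List (Act F)) : Prop :=
  IsPlan M π ∧ ∀ π', IsPlan M π' → planCost M π ≤ planCost M π'

/-- Goal state divergence of plans `π1` of `M1` and `π2` of `M2`:
the symmetric difference of the two final states. -/
def GSD (M1 M2 : PModel F) (π1 π2 : List (Act F)) : Finset F :=
  (runSeq M1.init π1 \ runSeq M2.init π2) ∪ (runSeq M2.init π2 \ runSeq M1.init π1)

/-- All achievable values `|GSD(π1, M1, π2, M2)|` over pairs of valid plans. -/
def gsdVals (M1 M2 : PModel F) : Set ℕ :=
  { n | ∃ π1 π2, IsPlan M1 π1 ∧ IsPlan M2 π2 ∧ n = (GSD M1 M2 π1 π2).card }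

/-- Maximal (worst-case) goal state divergence `GD↑(M1, M2)`. -/
noncomputable def GDup (M1 M2 : PModel F) : ℕ := sSup (gsdVals M1 M2)

/-- Minimal (best-case) goal state divergence `GD↓(M1, M2)`. -/
noncomputable def GDdown (M1 M2 : PModel F) : ℕ := sInf (gsdVals M1 M2)

/-- Fluents of the compiled model `M^λ`: the robot copy `F^R`, the disjoint human copy
`F^H`, the housekeeping fluents `robot_can_act`/`human_can_act`, and one compare fluent
`f^κ` per original fluent. -/
inductive LF (F : Type) where
  | robot : F → LF F
  | human : F → LF F
  | robotCanAct : LF F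
  | humanCanAct : LF F
  | compare : F → LF F
deriving DecidableEq

variable {F : Type} [DecidableEq F] in
/-- A robot action of `M^R` lifted into the compiled model: expressed in the robot copy of
the fluents, with `robot_can_act` added as a positive precondition. -/
def liftR (a : Act F) : Act (LF F) where
  prePos := a.prePos.image LF.robot ∪ {LF.robotCanAct}
  preNeg := a.preNeg.image LF.robot
  addE := a.addE.image LF.robot
  delE := a.delE.image LF.robot

variable {F : Type} [DecidableEq F] in
/-- A human action of `M^H` lifted into the compiled model: expressed in the human copy of
the fluents, with `human_can_act` added as a positive precondition. -/
def liftH (a : Act F) : Act (LF F) where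
  prePos := a.prePos.image LF.human ∪ {LF.humanCanAct}
  preNeg := a.preNeg.image LF.human
  addE := a.addE.image LF.human
  delE := a.delE.image LF.human

variable {F : Type} [DecidableEq F] in
/-- The human flip action: requires the human copy of the goal and `human_can_act`;
deletes `human_can_act` and adds `robot_can_act`. -/
def flipH (MH : PModel F) : Act (LF F) where
  prePos := MH.goal.image LF.human ∪ {LF.humanCanAct}
  preNeg := ∅
  addE := {LF.robotCanAct}
  delE := {LF.humanCanAct}

variable {F : Type} [DecidableEq F] in
/-- The robot flip action: requires the robot goal and `robot_can_act`;
deletes `robot_can_act`. -/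
def flipR (MR : PModel F) : Act (LF F) where
  prePos := MR.goal.image LF.robot ∪ {LF.robotCanAct}
  preNeg := ∅
  addE := ∅
  delE := {LF.robotCanAct}

variable {F : Type} [DecidableEq F] in
/-- Check disagreement action `a^1_{f}`: fires when `f` holds for the robot but not in the
human copy; adds the compare fluent `f^κ`. -/
def chk1 (f : F) : Act (LF F) where
  prePos := {LF.robot f}
  preNeg := {LF.human f, LF.robotCanAct, LF.humanCanAct, LF.compare f}
  addE := {LF.compare f}
  delE := ∅

variable {F : Type} [DecidableEq F] in
/-- Check disagreement action `a^2_{f}`: fires when `f` holds in the human copy but not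
for the robot; adds the compare fluent `f^κ`. -/
def chk2 (f : F) : Act (LF F) where
  prePos := {LF.human f}
  preNeg := {LF.robot f, LF.robotCanAct, LF.humanCanAct, LF.compare f}
  addE := {LF.compare f}
  delE := ∅

variable {F : Type} [DecidableEq F] in
/-- Check agreement action `a^3_{f}`: fires when `f` holds in both copies; adds `f^κ`. -/
def chk3 (f : F) : Act (LF F) where
  prePos := {LF.robot f, LF.human f}
  preNeg := {LF.robotCanAct, LF.humanCanAct, LF.compare f}
  addE := {LF.compare f}
  delE := ∅

variable {F : Type} [DecidableEq F] in
/-- Check agreement action `a^4_{f}`: fires when `f` holds in neither copy; adds `f^κ`. -/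
def chk4 (f : F) : Act (LF F) where
  prePos := ∅
  preNeg := {LF.robot f, LF.human f, LF.robotCanAct, LF.humanCanAct, LF.compare f}
  addE := {LF.compare f}
  delE := ∅

variable {F : Type} [DecidableEq F] in
/-- The compiled model `M^λ` for the pair `⟨M^R, M^H⟩` (sharing fluent set `F = F^R`),
with cost function `c`: lifted robot and human actions, the two flip actions, and the four
check actions per fluent; initial state `I^R ∪ I^H ∪ {human_can_act}`; goal
`G^R ∪ G^H ∪ F^κ`. -/
def compiled (MR MH : PModel F) (c : Act (LF F) → ℕ) : PModel (LF F) where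
  fluents := MR.fluents.image LF.robot ∪ MR.fluents.image LF.human ∪
    {LF.robotCanAct, LF.humanCanAct} ∪ MR.fluents.image LF.compare
  actions := MR.actions.image liftR ∪ MH.actions.image liftH ∪
    {flipH MH, flipR MR} ∪ MR.fluents.image chk1 ∪ MR.fluents.image chk2 ∪
    MR.fluents.image chk3 ∪ MR.fluents.image chk4
  cost := c
  init := MR.init.image LF.robot ∪ MH.init.image LF.human ∪ {LF.humanCanAct}
  goal := MR.goal.image LF.robot ∪ MH.goal.image LF.human ∪ MR.fluents.image LF.compare

variable {F : Type} [DecidableEq F] in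
/-- `H(π^λ)`: the subsequence of human-copy actions appearing in `π^λ`. -/
def humanPart (MH : PModel F) (π : List (Act (LF F))) : List (Act (LF F)) :=
  π.filter (fun a => decide (a ∈ MH.actions.image liftH))

variable {F : Type} [DecidableEq F] in
/-- `R(π^λ)`: the subsequence of robot actions appearing in `π^λ`. -/
def robotPart (MR : PModel F) (π : List (Act (LF F))) : List (Act (LF F)) :=
  π.filter (fun a => decide (a ∈ MR.actions.image liftR))

variable {F : Type} [DecidableEq F] in
/-- `|κ⁻(π^λ)|`: the number of check disagreement actions occurring in `π^λ`. -/
def disCount (MR : PModel F) (π : List (Act (LF F))) : ℕ :=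
  π.countP (fun a => decide (∃ f ∈ MR.fluents, a = chk1 f ∨ a = chk2 f))

variable {F : Type} [DecidableEq F] in
/-- `|κ⁺(π^λ)|`: the number of check agreement actions occurring in `π^λ`. -/
def agrCount (MR : PModel F) (π : List (Act (LF F))) : ℕ :=
  π.countP (fun a => decide (∃ f ∈ MR.fluents, a = chk3 f ∨ a = chk4 f))

variable {F : Type} [DecidableEq F] in
/-- A well-formed planning model: initial state, goal, and all action components are
contained in the fluent set. -/
def WellFormed (M : PModel F) : Prop :=
  M.init ⊆ M.fluents ∧ M.goal ⊆ M.fluents ∧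
  ∀ a ∈ M.actions,
    a.prePos ⊆ M.fluents ∧ a.preNeg ⊆ M.fluents ∧
    a.addE ⊆ M.fluents ∧ a.delE ⊆ M.fluents


namespace Prop3Aux
set_option linter.unusedSectionVars false

open Finset

variable {F : Type} [DecidableEq F]

lemma runSeq_append (s : Finset F) (l1 l2 : List (Act F)) :
    runSeq s (l1 ++ l2) = runSeq (runSeq s l1) l2 := by
  induction l1 generalizing s with
  | nil => rfl
  | cons a t ih => simp [runSeq, ih]

lemma execFrom_append (M : PModel F) (s : Finset F) (l1 l2 : List (Act F)) :
    ExecFrom M s (l1 ++ l2) ↔ ExecFrom M s l1 ∧ ExecFrom M (runSeq s l1) l2 := by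
  induction l1 generalizing s with
  | nil => simp [ExecFrom, runSeq]
  | cons a t ih => simp [ExecFrom, runSeq, ih, and_assoc]

lemma execFrom_mem_actions (M : PModel F) :
    ∀ (l : List (Act F)) (s : Finset F), ExecFrom M s l → ∀ a ∈ l, a ∈ M.actions := by
  intro l
  induction l with
  | nil => intro s _ a ha; simp at ha
  | cons b t ih =>
    intro s hex a ha
    obtain ⟨hb, -, hrest⟩ := hex
    rcases List.mem_cons.1 ha with rfl | ha
    · exact hb
    · exact ih _ hrest a ha

lemma runSeq_subset (M : PModel F) (hwf : WellFormed M) :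
    ∀ (l : List (Act F)) (s : Finset F), ExecFrom M s l → s ⊆ M.fluents →
      runSeq s l ⊆ M.fluents := by
  intro l
  induction l with
  | nil => intro s _ hs; exact hs
  | cons a t ih =>
    intro s hex hs
    obtain ⟨ha, -, hrest⟩ := hex
    refine ih _ hrest ?_
    intro x hx
    simp only [stepAct, Finset.mem_sdiff, Finset.mem_union] at hx
    rcases hx.1 with h | h
    · exact hs h
    · exact (hwf.2.2 a ha).2.2.1 h

/-- The list of states visited while executing `l` from `s`. -/
def states (s : Finset F) : List (Act F) → List (Finset F)
  | [] => [s]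
  | a :: l => s :: states (stepAct s a) l

lemma states_length (s : Finset F) (l : List (Act F)) :
    (states s l).length = l.length + 1 := by
  induction l generalizing s with
  | nil => rfl
  | cons a t ih => simp [states, ih]

lemma states_subset (M : PModel F) (hwf : WellFormed M) :
    ∀ (l : List (Act F)) (s : Finset F), ExecFrom M s l → s ⊆ M.fluents →
      ∀ t ∈ states s l, t ⊆ M.fluents := by
  intro l
  induction l with
  | nil => intro s _ hs t ht; simp [states] at ht; subst ht; exact hs
  | cons a t ih =>
    intro s hex hs u hu
    obtain ⟨ha, -, hrest⟩ := hex
    have hstep : stepAct s a ⊆ M.fluents := by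
      intro x hx
      simp only [stepAct, Finset.mem_sdiff, Finset.mem_union] at hx
      rcases hx.1 with h | h
      · exact hs h
      · exact (hwf.2.2 a ha).2.2.1 h
    rcases List.mem_cons.1 hu with rfl | hu
    · exact hs
    · exact ih _ hrest hstep u hu

lemma exec_suffix_of_mem_states (M : PModel F) :
    ∀ (l : List (Act F)) (s t : Finset F), ExecFrom M s l → t ∈ states s l →
      ∃ l', ExecFrom M t l' ∧ runSeq t l' = runSeq s l ∧ l'.length ≤ l.length := by
  intro l
  induction l with
  | nil =>
    intro s t _ ht
    simp [states] at ht; subst ht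
    exact ⟨[], trivial, rfl, le_refl _⟩
  | cons a tl ih =>
    intro s t hex ht
    obtain ⟨ha, hea, hrest⟩ := hex
    rcases List.mem_cons.1 ht with rfl | ht
    · exact ⟨a :: tl, ⟨ha, hea, hrest⟩, rfl, le_refl _⟩
    · obtain ⟨l', h1, h2, h3⟩ := ih _ _ hrest ht
      exact ⟨l', h1, h2, le_trans h3 (Nat.le_succ _)⟩

lemma splice_of_dup (M : PModel F) :
    ∀ (l : List (Act F)) (s t : Finset F), ExecFrom M s l → List.Duplicate t (states s l) →
      ∃ l', ExecFrom M s l' ∧ runSeq s l' = runSeq s l ∧ l'.length < l.length := by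
  intro l
  induction l with
  | nil =>
    intro s t _ ht
    exact absurd ht (List.not_duplicate_singleton t s)
  | cons a tl ih =>
    intro s t hex ht
    obtain ⟨ha, hea, hrest⟩ := hex
    rw [show states s (a :: tl) = s :: states (stepAct s a) tl from rfl,
      List.duplicate_cons_iff] at ht
    rcases ht with ⟨rfl, hmem⟩ | hdup
    · obtain ⟨l', h1, h2, h3⟩ := exec_suffix_of_mem_states M tl (stepAct s a) s hrest hmem
      refine ⟨l', h1, ?_, lt_of_le_of_lt h3 (Nat.lt_succ_self _)⟩
      rw [h2]; rfl
    · obtain ⟨l', h1, h2, h3⟩ := ih (stepAct s a) t hrest hdup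
      exact ⟨a :: l', ⟨ha, hea, h1⟩, h2, Nat.succ_lt_succ h3⟩

lemma shorten_exec (M : PModel F) (hwf : WellFormed M) :
    ∀ (n : ℕ) (l : List (Act F)) (s : Finset F), l.length ≤ n → ExecFrom M s l →
      s ⊆ M.fluents →
      ∃ l', ExecFrom M s l' ∧ runSeq s l' = runSeq s l ∧
        l'.length + 1 ≤ 2 ^ M.fluents.card := by
  intro n
  induction n with
  | zero =>
    intro l s hl hex _
    refine ⟨l, hex, rfl, ?_⟩
    have : l.length = 0 := Nat.le_zero.1 hl
    rw [this]
    exact Nat.one_le_two_pow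
  | succ n ih =>
    intro l s hl hex hs
    by_cases hshort : l.length + 1 ≤ 2 ^ M.fluents.card
    · exact ⟨l, hex, rfl, hshort⟩
    · push_neg at hshort
      have hnotnd : ¬ (states s l).Nodup := by
        intro hnd
        have h1 : (states s l).toFinset.card = l.length + 1 := by
          rw [List.toFinset_card_of_nodup hnd, states_length]
        have h2 : (states s l).toFinset ⊆ M.fluents.powerset := by
          intro u hu
          rw [List.mem_toFinset] at hu
          exact Finset.mem_powerset.2 (states_subset M hwf l s hex hs u hu)
        have := Finset.card_le_card h2
        rw [h1, Finset.card_powerset] at this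
        omega
      obtain ⟨t, hdup⟩ := List.exists_duplicate_iff_not_nodup.2 hnotnd
      obtain ⟨l', h1, h2, h3⟩ := splice_of_dup M l s t hex hdup
      obtain ⟨l'', g1, g2, g3⟩ := ih l' s (by omega) h1 hs
      exact ⟨l'', g1, g2.trans h2, g3⟩


section Proj

variable [Fintype F]

def rpj (s : Finset (LF F)) : Finset F := Finset.univ.filter (fun f => LF.robot f ∈ s)
def hpj (s : Finset (LF F)) : Finset F := Finset.univ.filter (fun f => LF.human f ∈ s)
def cpj (s : Finset (LF F)) : Finset F := Finset.univ.filter (fun f => LF.compare f ∈ s)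

@[simp] lemma mem_rpj {s : Finset (LF F)} {f : F} : f ∈ rpj s ↔ LF.robot f ∈ s := by
  simp [rpj]

@[simp] lemma mem_hpj {s : Finset (LF F)} {f : F} : f ∈ hpj s ↔ LF.human f ∈ s := by
  simp [hpj]

@[simp] lemma mem_cpj {s : Finset (LF F)} {f : F} : f ∈ cpj s ↔ LF.compare f ∈ s := by
  simp [cpj]

/-- symmetric difference -/
def symd (r h : Finset F) : Finset F := (r \ h) ∪ (h \ r)

-- step lemmas for liftH
lemma rpj_step_liftH (s : Finset (LF F)) (a : Act F) :
    rpj (stepAct s (liftH a)) = rpj s := by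
  ext f; simp [stepAct, liftH]

lemma hpj_step_liftH (s : Finset (LF F)) (a : Act F) :
    hpj (stepAct s (liftH a)) = stepAct (hpj s) a := by
  ext f; simp [stepAct, liftH]

lemma cpj_step_liftH (s : Finset (LF F)) (a : Act F) :
    cpj (stepAct s (liftH a)) = cpj s := by
  ext f; simp [stepAct, liftH]

lemma rca_step_liftH (s : Finset (LF F)) (a : Act F) :
    LF.robotCanAct ∈ stepAct s (liftH a) ↔ LF.robotCanAct ∈ s := by
  simp [stepAct, liftH]

lemma hca_step_liftH (s : Finset (LF F)) (a : Act F) :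
    LF.humanCanAct ∈ stepAct s (liftH a) ↔ LF.humanCanAct ∈ s := by
  simp [stepAct, liftH]

-- step lemmas for liftR
lemma rpj_step_liftR (s : Finset (LF F)) (a : Act F) :
    rpj (stepAct s (liftR a)) = stepAct (rpj s) a := by
  ext f; simp [stepAct, liftR]

lemma hpj_step_liftR (s : Finset (LF F)) (a : Act F) :
    hpj (stepAct s (liftR a)) = hpj s := by
  ext f; simp [stepAct, liftR]

lemma cpj_step_liftR (s : Finset (LF F)) (a : Act F) :
    cpj (stepAct s (liftR a)) = cpj s := by
  ext f; simp [stepAct, liftR]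

lemma rca_step_liftR (s : Finset (LF F)) (a : Act F) :
    LF.robotCanAct ∈ stepAct s (liftR a) ↔ LF.robotCanAct ∈ s := by
  simp [stepAct, liftR]

lemma hca_step_liftR (s : Finset (LF F)) (a : Act F) :
    LF.humanCanAct ∈ stepAct s (liftR a) ↔ LF.humanCanAct ∈ s := by
  simp [stepAct, liftR]

-- step lemmas for flips
lemma rpj_step_flipH (s : Finset (LF F)) (MH : PModel F) :
    rpj (stepAct s (flipH MH)) = rpj s := by
  ext f; simp [stepAct, flipH]

lemma hpj_step_flipH (s : Finset (LF F)) (MH : PModel F) :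
    hpj (stepAct s (flipH MH)) = hpj s := by
  ext f; simp [stepAct, flipH]

lemma cpj_step_flipH (s : Finset (LF F)) (MH : PModel F) :
    cpj (stepAct s (flipH MH)) = cpj s := by
  ext f; simp [stepAct, flipH]

lemma rca_step_flipH (s : Finset (LF F)) (MH : PModel F) :
    LF.robotCanAct ∈ stepAct s (flipH MH) := by
  simp [stepAct, flipH]

lemma hca_step_flipH (s : Finset (LF F)) (MH : PModel F) :
    LF.humanCanAct ∉ stepAct s (flipH MH) := by
  simp [stepAct, flipH]

lemma rpj_step_flipR (s : Finset (LF F)) (MR : PModel F) :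
    rpj (stepAct s (flipR MR)) = rpj s := by
  ext f; simp [stepAct, flipR]

lemma hpj_step_flipR (s : Finset (LF F)) (MR : PModel F) :
    hpj (stepAct s (flipR MR)) = hpj s := by
  ext f; simp [stepAct, flipR]

lemma cpj_step_flipR (s : Finset (LF F)) (MR : PModel F) :
    cpj (stepAct s (flipR MR)) = cpj s := by
  ext f; simp [stepAct, flipR]

lemma rca_step_flipR (s : Finset (LF F)) (MR : PModel F) :
    LF.robotCanAct ∉ stepAct s (flipR MR) := by
  simp [stepAct, flipR]

lemma hca_step_flipR (s : Finset (LF F)) (MR : PModel F) :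
    LF.humanCanAct ∈ stepAct s (flipR MR) ↔ LF.humanCanAct ∈ s := by
  simp [stepAct, flipR]

-- step lemmas for checks (all four have the same effect)
lemma step_chk1 (s : Finset (LF F)) (g : F) :
    stepAct s (chk1 g) = s ∪ {LF.compare g} := by
  simp [stepAct, chk1]

lemma step_chk2 (s : Finset (LF F)) (g : F) :
    stepAct s (chk2 g) = s ∪ {LF.compare g} := by
  simp [stepAct, chk2]

lemma step_chk3 (s : Finset (LF F)) (g : F) :
    stepAct s (chk3 g) = s ∪ {LF.compare g} := by
  simp [stepAct, chk3]

lemma step_chk4 (s : Finset (LF F)) (g : F) :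
    stepAct s (chk4 g) = s ∪ {LF.compare g} := by
  simp [stepAct, chk4]

lemma rpj_union_cmp (s : Finset (LF F)) (g : F) :
    rpj (s ∪ {LF.compare g}) = rpj s := by
  ext f; simp

lemma hpj_union_cmp (s : Finset (LF F)) (g : F) :
    hpj (s ∪ {LF.compare g}) = hpj s := by
  ext f; simp

lemma cpj_union_cmp (s : Finset (LF F)) (g : F) :
    cpj (s ∪ {LF.compare g}) = insert g (cpj s) := by
  ext f; simp [Finset.mem_insert]

lemma rca_union_cmp (s : Finset (LF F)) (g : F) :
    LF.robotCanAct ∈ s ∪ {LF.compare g} ↔ LF.robotCanAct ∈ s := by simp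

lemma hca_union_cmp (s : Finset (LF F)) (g : F) :
    LF.humanCanAct ∈ s ∪ {LF.compare g} ↔ LF.humanCanAct ∈ s := by simp

-- executability characterizations
lemma exec_liftH_iff {s : Finset (LF F)} {a : Act F} :
    execAct s (liftH a) ↔ LF.humanCanAct ∈ s ∧ execAct (hpj s) a := by
  constructor
  · rintro ⟨hpos, hneg⟩
    simp only [liftH, Finset.union_subset_iff, Finset.singleton_subset_iff] at hpos
    refine ⟨hpos.2, ?_, ?_⟩
    · intro f hf
      exact mem_hpj.2 (hpos.1 (Finset.mem_image_of_mem _ hf))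
    · rw [Finset.eq_empty_iff_forall_notMem]
      intro f hf
      rw [Finset.mem_inter, mem_hpj] at hf
      have : LF.human f ∈ a.preNeg.image LF.human ∩ s :=
        Finset.mem_inter.2 ⟨Finset.mem_image_of_mem _ hf.1, hf.2⟩
      rw [show (liftH a).preNeg = a.preNeg.image LF.human from rfl] at hneg
      rw [hneg] at this
      exact absurd this (Finset.notMem_empty _)
  · rintro ⟨hca, hpos, hneg⟩
    constructor
    · simp only [liftH, Finset.union_subset_iff, Finset.singleton_subset_iff]
      refine ⟨?_, hca⟩
      intro x hx
      rw [Finset.mem_image] at hx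
      obtain ⟨f, hf, rfl⟩ := hx
      exact mem_hpj.1 (hpos hf)
    · rw [Finset.eq_empty_iff_forall_notMem]
      intro x hx
      rw [show (liftH a).preNeg = a.preNeg.image LF.human from rfl] at hx
      rw [Finset.mem_inter, Finset.mem_image] at hx
      obtain ⟨⟨f, hf, rfl⟩, hx2⟩ := hx
      have : f ∈ a.preNeg ∩ hpj s := Finset.mem_inter.2 ⟨hf, mem_hpj.2 hx2⟩
      rw [hneg] at this
      exact absurd this (Finset.notMem_empty _)

lemma exec_liftR_iff {s : Finset (LF F)} {a : Act F} :
    execAct s (liftR a) ↔ LF.robotCanAct ∈ s ∧ execAct (rpj s) a := by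
  constructor
  · rintro ⟨hpos, hneg⟩
    simp only [liftR, Finset.union_subset_iff, Finset.singleton_subset_iff] at hpos
    refine ⟨hpos.2, ?_, ?_⟩
    · intro f hf
      exact mem_rpj.2 (hpos.1 (Finset.mem_image_of_mem _ hf))
    · rw [Finset.eq_empty_iff_forall_notMem]
      intro f hf
      rw [Finset.mem_inter, mem_rpj] at hf
      have : LF.robot f ∈ a.preNeg.image LF.robot ∩ s :=
        Finset.mem_inter.2 ⟨Finset.mem_image_of_mem _ hf.1, hf.2⟩
      rw [show (liftR a).preNeg = a.preNeg.image LF.robot from rfl] at hneg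
      rw [hneg] at this
      exact absurd this (Finset.notMem_empty _)
  · rintro ⟨hca, hpos, hneg⟩
    constructor
    · simp only [liftR, Finset.union_subset_iff, Finset.singleton_subset_iff]
      refine ⟨?_, hca⟩
      intro x hx
      rw [Finset.mem_image] at hx
      obtain ⟨f, hf, rfl⟩ := hx
      exact mem_rpj.1 (hpos hf)
    · rw [Finset.eq_empty_iff_forall_notMem]
      intro x hx
      rw [show (liftR a).preNeg = a.preNeg.image LF.robot from rfl] at hx
      rw [Finset.mem_inter, Finset.mem_image] at hx
      obtain ⟨⟨f, hf, rfl⟩, hx2⟩ := hx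
      have : f ∈ a.preNeg ∩ rpj s := Finset.mem_inter.2 ⟨hf, mem_rpj.2 hx2⟩
      rw [hneg] at this
      exact absurd this (Finset.notMem_empty _)

lemma exec_flipH_iff {s : Finset (LF F)} {MH : PModel F} :
    execAct s (flipH MH) ↔ MH.goal ⊆ hpj s ∧ LF.humanCanAct ∈ s := by
  constructor
  · rintro ⟨hpos, -⟩
    simp only [flipH, Finset.union_subset_iff, Finset.singleton_subset_iff] at hpos
    refine ⟨?_, hpos.2⟩
    intro f hf
    exact mem_hpj.2 (hpos.1 (Finset.mem_image_of_mem _ hf))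
  · rintro ⟨hg, hca⟩
    refine ⟨?_, by simp [flipH]⟩
    simp only [flipH, Finset.union_subset_iff, Finset.singleton_subset_iff]
    refine ⟨?_, hca⟩
    intro x hx
    rw [Finset.mem_image] at hx
    obtain ⟨f, hf, rfl⟩ := hx
    exact mem_hpj.1 (hg hf)

lemma exec_flipR_iff {s : Finset (LF F)} {MR : PModel F} :
    execAct s (flipR MR) ↔ MR.goal ⊆ rpj s ∧ LF.robotCanAct ∈ s := by
  constructor
  · rintro ⟨hpos, -⟩
    simp only [flipR, Finset.union_subset_iff, Finset.singleton_subset_iff] at hpos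
    refine ⟨?_, hpos.2⟩
    intro f hf
    exact mem_rpj.2 (hpos.1 (Finset.mem_image_of_mem _ hf))
  · rintro ⟨hg, hca⟩
    refine ⟨?_, by simp [flipR]⟩
    simp only [flipR, Finset.union_subset_iff, Finset.singleton_subset_iff]
    refine ⟨?_, hca⟩
    intro x hx
    rw [Finset.mem_image] at hx
    obtain ⟨f, hf, rfl⟩ := hx
    exact mem_rpj.1 (hg hf)

lemma exec_chk1_iff {s : Finset (LF F)} {g : F} :
    execAct s (chk1 g) ↔ LF.robot g ∈ s ∧ LF.human g ∉ s ∧ LF.robotCanAct ∉ s ∧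
      LF.humanCanAct ∉ s ∧ LF.compare g ∉ s := by
  simp [execAct, chk1, Finset.singleton_subset_iff, Finset.eq_empty_iff_forall_notMem,
    Finset.mem_inter, Finset.mem_insert]

lemma exec_chk2_iff {s : Finset (LF F)} {g : F} :
    execAct s (chk2 g) ↔ LF.human g ∈ s ∧ LF.robot g ∉ s ∧ LF.robotCanAct ∉ s ∧
      LF.humanCanAct ∉ s ∧ LF.compare g ∉ s := by
  simp [execAct, chk2, Finset.singleton_subset_iff, Finset.eq_empty_iff_forall_notMem,
    Finset.mem_inter, Finset.mem_insert]

lemma exec_chk3_iff {s : Finset (LF F)} {g : F} :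
    execAct s (chk3 g) ↔ LF.robot g ∈ s ∧ LF.human g ∈ s ∧ LF.robotCanAct ∉ s ∧
      LF.humanCanAct ∉ s ∧ LF.compare g ∉ s := by
  simp [execAct, chk3, Finset.insert_subset_iff, Finset.singleton_subset_iff,
    Finset.eq_empty_iff_forall_notMem, Finset.mem_inter, Finset.mem_insert]
  tauto

lemma exec_chk4_iff {s : Finset (LF F)} {g : F} :
    execAct s (chk4 g) ↔ LF.robot g ∉ s ∧ LF.human g ∉ s ∧ LF.robotCanAct ∉ s ∧
      LF.humanCanAct ∉ s ∧ LF.compare g ∉ s := by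
  simp [execAct, chk4, Finset.eq_empty_iff_forall_notMem,
    Finset.mem_inter, Finset.mem_insert]

end Proj


section Classify

lemma mem_compiled_actions {MR MH : PModel F} {c : Act (LF F) → ℕ} {a : Act (LF F)} :
    a ∈ (compiled MR MH c).actions ↔
      (∃ a0 ∈ MR.actions, liftR a0 = a) ∨ (∃ a0 ∈ MH.actions, liftH a0 = a) ∨
      a = flipH MH ∨ a = flipR MR ∨
      (∃ f ∈ MR.fluents, chk1 f = a) ∨ (∃ f ∈ MR.fluents, chk2 f = a) ∨
      (∃ f ∈ MR.fluents, chk3 f = a) ∨ (∃ f ∈ MR.fluents, chk4 f = a) := by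
  simp only [compiled, Finset.mem_union, Finset.mem_image, Finset.mem_insert,
    Finset.mem_singleton]
  constructor
  · rintro ((((((h | h) | (h | h)) | h) | h) | h) | h)
    · exact Or.inl h
    · exact Or.inr (Or.inl h)
    · exact Or.inr (Or.inr (Or.inl h))
    · exact Or.inr (Or.inr (Or.inr (Or.inl h)))
    · exact Or.inr (Or.inr (Or.inr (Or.inr (Or.inl h))))
    · exact Or.inr (Or.inr (Or.inr (Or.inr (Or.inr (Or.inl h)))))
    · exact Or.inr (Or.inr (Or.inr (Or.inr (Or.inr (Or.inr (Or.inl h))))))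
    · exact Or.inr (Or.inr (Or.inr (Or.inr (Or.inr (Or.inr (Or.inr h))))))
  · rintro (h | h | h | h | h | h | h | h)
    · exact Or.inl (Or.inl (Or.inl (Or.inl (Or.inl (Or.inl h)))))
    · exact Or.inl (Or.inl (Or.inl (Or.inl (Or.inl (Or.inr h)))))
    · exact Or.inl (Or.inl (Or.inl (Or.inl (Or.inr (Or.inl h)))))
    · exact Or.inl (Or.inl (Or.inl (Or.inl (Or.inr (Or.inr h)))))
    · exact Or.inl (Or.inl (Or.inl (Or.inr h)))
    · exact Or.inl (Or.inl (Or.inr h))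
    · exact Or.inl (Or.inr h)
    · exact Or.inr h

-- distinctness lemmas
lemma liftR_ne_chk (a : Act F) (f : F) :
    liftR a ≠ chk1 f ∧ liftR a ≠ chk2 f ∧ liftR a ≠ chk3 f ∧ liftR a ≠ chk4 f := by
  refine ⟨?_, ?_, ?_, ?_⟩ <;>
    · intro h
      have hm : (LF.robotCanAct : LF F) ∈ (liftR a).preNeg := by
        rw [h] <;> simp [chk1, chk2, chk3, chk4, Finset.mem_insert]
      simp [liftR] at hm

lemma liftH_ne_chk (a : Act F) (f : F) :
    liftH a ≠ chk1 f ∧ liftH a ≠ chk2 f ∧ liftH a ≠ chk3 f ∧ liftH a ≠ chk4 f := by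
  refine ⟨?_, ?_, ?_, ?_⟩ <;>
    · intro h
      have hm : (LF.robotCanAct : LF F) ∈ (liftH a).preNeg := by
        rw [h] <;> simp [chk1, chk2, chk3, chk4, Finset.mem_insert]
      simp [liftH] at hm

lemma flipH_ne_chk (MH : PModel F) (f : F) :
    flipH MH ≠ chk1 f ∧ flipH MH ≠ chk2 f ∧ flipH MH ≠ chk3 f ∧ flipH MH ≠ chk4 f := by
  refine ⟨?_, ?_, ?_, ?_⟩ <;>
    · intro h
      have hm : (LF.robotCanAct : LF F) ∈ (flipH MH).preNeg := by
        rw [h] <;> simp [chk1, chk2, chk3, chk4, Finset.mem_insert]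
      simp [flipH] at hm

lemma flipR_ne_chk (MR : PModel F) (f : F) :
    flipR MR ≠ chk1 f ∧ flipR MR ≠ chk2 f ∧ flipR MR ≠ chk3 f ∧ flipR MR ≠ chk4 f := by
  refine ⟨?_, ?_, ?_, ?_⟩ <;>
    · intro h
      have hm : (LF.robotCanAct : LF F) ∈ (flipR MR).preNeg := by
        rw [h] <;> simp [chk1, chk2, chk3, chk4, Finset.mem_insert]
      simp [flipR] at hm

lemma chk1_ne_chk3 (g f : F) : chk1 g ≠ chk3 f := by
  intro h
  have hm : (LF.human f : LF F) ∈ (chk1 g).prePos := by rw [h]; simp [chk3]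
  simp [chk1] at hm

lemma chk1_ne_chk4 (g f : F) : chk1 g ≠ chk4 f := by
  intro h
  have hm : (LF.robot g : LF F) ∈ (chk4 f).prePos := by rw [← h]; simp [chk1]
  simp [chk4] at hm

lemma chk2_ne_chk3 (g f : F) : chk2 g ≠ chk3 f := by
  intro h
  have hm : (LF.robot f : LF F) ∈ (chk2 g).prePos := by rw [h]; simp [chk3]
  simp [chk2] at hm

lemma chk2_ne_chk4 (g f : F) : chk2 g ≠ chk4 f := by
  intro h
  have hm : (LF.human g : LF F) ∈ (chk4 f).prePos := by rw [← h]; simp [chk2]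
  simp [chk4] at hm

-- predicates used by disCount / agrCount
lemma disCount_cons (MR : PModel F) (a : Act (LF F)) (l : List (Act (LF F))) :
    disCount MR (a :: l) =
      disCount MR l + (if (∃ f ∈ MR.fluents, a = chk1 f ∨ a = chk2 f) then 1 else 0) := by
  simp [disCount, List.countP_cons]

lemma agrCount_cons (MR : PModel F) (a : Act (LF F)) (l : List (Act (LF F))) :
    agrCount MR (a :: l) =
      agrCount MR l + (if (∃ f ∈ MR.fluents, a = chk3 f ∨ a = chk4 f) then 1 else 0) := by
  simp [agrCount, List.countP_cons]

lemma not_dis_pred {MR : PModel F} {a : Act (LF F)}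
    (h : LF.robotCanAct ∉ a.preNeg) : ¬ (∃ f ∈ MR.fluents, a = chk1 f ∨ a = chk2 f) := by
  rintro ⟨f, -, rfl | rfl⟩ <;> simp [chk1, chk2, Finset.mem_insert] at h

lemma not_agr_pred {MR : PModel F} {a : Act (LF F)}
    (h : LF.robotCanAct ∉ a.preNeg) : ¬ (∃ f ∈ MR.fluents, a = chk3 f ∨ a = chk4 f) := by
  rintro ⟨f, -, rfl | rfl⟩ <;> simp [chk3, chk4, Finset.mem_insert] at h

lemma rca_not_preNeg_liftR (a : Act F) : (LF.robotCanAct : LF F) ∉ (liftR a).preNeg := by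
  simp [liftR]

lemma rca_not_preNeg_liftH (a : Act F) : (LF.robotCanAct : LF F) ∉ (liftH a).preNeg := by
  simp [liftH]

lemma rca_not_preNeg_flipH (MH : PModel F) :
    (LF.robotCanAct : LF F) ∉ (flipH MH).preNeg := by simp [flipH]

lemma rca_not_preNeg_flipR (MR : PModel F) :
    (LF.robotCanAct : LF F) ∉ (flipR MR).preNeg := by simp [flipR]

lemma dis_pred_chk1 {MR : PModel F} {g : F} (hg : g ∈ MR.fluents) :
    ∃ f ∈ MR.fluents, chk1 g = chk1 f ∨ chk1 g = chk2 f := ⟨g, hg, Or.inl rfl⟩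

lemma dis_pred_chk2 {MR : PModel F} {g : F} (hg : g ∈ MR.fluents) :
    ∃ f ∈ MR.fluents, chk2 g = chk1 f ∨ chk2 g = chk2 f := ⟨g, hg, Or.inr rfl⟩

lemma agr_pred_chk3 {MR : PModel F} {g : F} (hg : g ∈ MR.fluents) :
    ∃ f ∈ MR.fluents, chk3 g = chk3 f ∨ chk3 g = chk4 f := ⟨g, hg, Or.inl rfl⟩

lemma agr_pred_chk4 {MR : PModel F} {g : F} (hg : g ∈ MR.fluents) :
    ∃ f ∈ MR.fluents, chk4 g = chk3 f ∨ chk4 g = chk4 f := ⟨g, hg, Or.inr rfl⟩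

lemma not_agr_pred_chk1 {MR : PModel F} {g : F} :
    ¬ ∃ f ∈ MR.fluents, chk1 g = chk3 f ∨ chk1 g = chk4 f := by
  rintro ⟨f, -, h | h⟩
  · exact chk1_ne_chk3 g f h
  · exact chk1_ne_chk4 g f h

lemma not_agr_pred_chk2 {MR : PModel F} {g : F} :
    ¬ ∃ f ∈ MR.fluents, chk2 g = chk3 f ∨ chk2 g = chk4 f := by
  rintro ⟨f, -, h | h⟩
  · exact chk2_ne_chk3 g f h
  · exact chk2_ne_chk4 g f h

lemma not_dis_pred_chk3 {MR : PModel F} {g : F} :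
    ¬ ∃ f ∈ MR.fluents, chk3 g = chk1 f ∨ chk3 g = chk2 f := by
  rintro ⟨f, -, h | h⟩
  · exact chk1_ne_chk3 f g h.symm
  · exact chk2_ne_chk3 f g h.symm

lemma not_dis_pred_chk4 {MR : PModel F} {g : F} :
    ¬ ∃ f ∈ MR.fluents, chk4 g = chk1 f ∨ chk4 g = chk2 f := by
  rintro ⟨f, -, h | h⟩
  · exact chk1_ne_chk4 f g h.symm
  · exact chk2_ne_chk4 f g h.symm

lemma disCount_nil (MR : PModel F) : disCount MR ([] : List (Act (LF F))) = 0 := by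
  simp [disCount]

lemma agrCount_nil (MR : PModel F) : agrCount MR ([] : List (Act (LF F))) = 0 := by
  simp [agrCount]

-- card splitting helpers
lemma split_mem {A B S : Finset F} {g : F} (hgA : g ∈ A) (hgB : g ∉ B) (hgS : g ∈ S) :
    ((A \ B) ∩ S).card = ((A \ insert g B) ∩ S).card + 1 ∧
    (A \ B) \ S = (A \ insert g B) \ S := by
  constructor
  · have heq : (A \ B) ∩ S = insert g ((A \ insert g B) ∩ S) := by
      ext x
      by_cases hx : x = g
      · subst hx; simp [hgA, hgB, hgS]
      · simp [Finset.mem_insert, hx]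
    rw [heq, Finset.card_insert_of_notMem (by simp)]
  · ext x
    by_cases hx : x = g
    · subst hx; simp [hgS]
    · simp [Finset.mem_insert, hx]

lemma split_not_mem {A B S : Finset F} {g : F} (hgA : g ∈ A) (hgB : g ∉ B) (hgS : g ∉ S) :
    ((A \ B) \ S).card = ((A \ insert g B) \ S).card + 1 ∧
    (A \ B) ∩ S = (A \ insert g B) ∩ S := by
  constructor
  · have heq : (A \ B) \ S = insert g ((A \ insert g B) \ S) := by
      ext x
      by_cases hx : x = g
      · subst hx; simp [hgA, hgB, hgS]
      · simp [Finset.mem_insert, hx]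
    rw [heq, Finset.card_insert_of_notMem (by simp)]
  · ext x
    by_cases hx : x = g
    · subst hx; simp [hgS]
    · simp [Finset.mem_insert, hx]

end Classify


section Claims

variable [Fintype F]

lemma mem_symd {r h : Finset F} {f : F} :
    f ∈ symd r h ↔ (f ∈ r ∧ f ∉ h) ∨ (f ∈ h ∧ f ∉ r) := by
  simp [symd]

lemma compiled_goal_subset {MR MH : PModel F} {c : Act (LF F) → ℕ} {s : Finset (LF F)}
    (h : (compiled MR MH c).goal ⊆ s) :
    MR.goal ⊆ rpj s ∧ MH.goal ⊆ hpj s ∧ MR.fluents ⊆ cpj s := by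
  refine ⟨?_, ?_, ?_⟩
  · intro f hf
    refine mem_rpj.2 (h ?_)
    exact Finset.mem_union_left _ (Finset.mem_union_left _ (Finset.mem_image_of_mem _ hf))
  · intro f hf
    refine mem_hpj.2 (h ?_)
    exact Finset.mem_union_left _ (Finset.mem_union_right _ (Finset.mem_image_of_mem _ hf))
  · intro f hf
    refine mem_cpj.2 (h ?_)
    exact Finset.mem_union_right _ (Finset.mem_image_of_mem _ hf)

lemma claimC (MR MH : PModel F) (c : Act (LF F) → ℕ) :
    ∀ (l : List (Act (LF F))) (s : Finset (LF F)),
      LF.robotCanAct ∉ s → LF.humanCanAct ∉ s →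
      ExecFrom (compiled MR MH c) s l →
      rpj (runSeq s l) = rpj s ∧ hpj (runSeq s l) = hpj s ∧
      cpj s ⊆ cpj (runSeq s l) ∧
      disCount MR l = ((cpj (runSeq s l) \ cpj s) ∩ symd (rpj s) (hpj s)).card ∧
      agrCount MR l = ((cpj (runSeq s l) \ cpj s) \ symd (rpj s) (hpj s)).card := by
  intro l
  induction l with
  | nil =>
    intro s _ _ _
    exact ⟨rfl, rfl, Finset.Subset.refl _, by simp [disCount, runSeq], by simp [agrCount, runSeq]⟩
  | cons a t ih =>
    intro s hrca hhca hex
    obtain ⟨hmem, hea, hrest⟩ := hex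
    rw [mem_compiled_actions] at hmem
    rcases hmem with ⟨a0, ha0, rfl⟩ | ⟨a0, ha0, rfl⟩ | rfl | rfl | ⟨g, hg, rfl⟩ |
      ⟨g, hg, rfl⟩ | ⟨g, hg, rfl⟩ | ⟨g, hg, rfl⟩
    · exact absurd (exec_liftR_iff.1 hea).1 hrca
    · exact absurd (exec_liftH_iff.1 hea).1 hhca
    · exact absurd (exec_flipH_iff.1 hea).2 hhca
    · exact absurd (exec_flipR_iff.1 hea).2 hrca
    · -- chk1
      obtain ⟨h1, h2, -, -, h5⟩ := exec_chk1_iff.1 hea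
      rw [step_chk1] at hrest
      have hrun : runSeq s (chk1 g :: t) = runSeq (s ∪ {LF.compare g}) t := by
        rw [show runSeq s (chk1 g :: t) = runSeq (stepAct s (chk1 g)) t from rfl, step_chk1]
      obtain ⟨ih1, ih2, ih3, ih4, ih5⟩ := ih (s ∪ {LF.compare g})
        (by rw [rca_union_cmp]; exact hrca) (by rw [hca_union_cmp]; exact hhca) hrest
      rw [rpj_union_cmp] at ih1
      rw [hpj_union_cmp] at ih2
      rw [cpj_union_cmp] at ih3
      rw [cpj_union_cmp, rpj_union_cmp, hpj_union_cmp] at ih4 ih5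
      have hgS : g ∈ symd (rpj s) (hpj s) :=
        mem_symd.2 (Or.inl ⟨mem_rpj.2 h1, fun hc => h2 (mem_hpj.1 hc)⟩)
      have hgcs : g ∉ cpj s := fun hc => h5 (mem_cpj.1 hc)
      have hgT : g ∈ cpj (runSeq (s ∪ {LF.compare g}) t) := ih3 (Finset.mem_insert_self g _)
      obtain ⟨hcard, hset⟩ := split_mem hgT hgcs hgS
      refine ⟨by rw [hrun, ih1], by rw [hrun, ih2], ?_, ?_, ?_⟩
      · rw [hrun]; exact fun x hx => ih3 (Finset.mem_insert_of_mem hx)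
      · rw [disCount_cons, if_pos (dis_pred_chk1 hg), hrun, hcard, ih4]
      · rw [agrCount_cons, if_neg not_agr_pred_chk1, hrun, hset, ih5]
        simp
    · -- chk2
      obtain ⟨h1, h2, -, -, h5⟩ := exec_chk2_iff.1 hea
      rw [step_chk2] at hrest
      have hrun : runSeq s (chk2 g :: t) = runSeq (s ∪ {LF.compare g}) t := by
        rw [show runSeq s (chk2 g :: t) = runSeq (stepAct s (chk2 g)) t from rfl, step_chk2]
      obtain ⟨ih1, ih2, ih3, ih4, ih5⟩ := ih (s ∪ {LF.compare g})
        (by rw [rca_union_cmp]; exact hrca) (by rw [hca_union_cmp]; exact hhca) hrest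
      rw [rpj_union_cmp] at ih1
      rw [hpj_union_cmp] at ih2
      rw [cpj_union_cmp] at ih3
      rw [cpj_union_cmp, rpj_union_cmp, hpj_union_cmp] at ih4 ih5
      have hgS : g ∈ symd (rpj s) (hpj s) :=
        mem_symd.2 (Or.inr ⟨mem_hpj.2 h1, fun hc => h2 (mem_rpj.1 hc)⟩)
      have hgcs : g ∉ cpj s := fun hc => h5 (mem_cpj.1 hc)
      have hgT : g ∈ cpj (runSeq (s ∪ {LF.compare g}) t) := ih3 (Finset.mem_insert_self g _)
      obtain ⟨hcard, hset⟩ := split_mem hgT hgcs hgS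
      refine ⟨by rw [hrun, ih1], by rw [hrun, ih2], ?_, ?_, ?_⟩
      · rw [hrun]; exact fun x hx => ih3 (Finset.mem_insert_of_mem hx)
      · rw [disCount_cons, if_pos (dis_pred_chk2 hg), hrun, hcard, ih4]
      · rw [agrCount_cons, if_neg not_agr_pred_chk2, hrun, hset, ih5]
        simp
    · -- chk3
      obtain ⟨h1, h2, -, -, h5⟩ := exec_chk3_iff.1 hea
      rw [step_chk3] at hrest
      have hrun : runSeq s (chk3 g :: t) = runSeq (s ∪ {LF.compare g}) t := by
        rw [show runSeq s (chk3 g :: t) = runSeq (stepAct s (chk3 g)) t from rfl, step_chk3]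
      obtain ⟨ih1, ih2, ih3, ih4, ih5⟩ := ih (s ∪ {LF.compare g})
        (by rw [rca_union_cmp]; exact hrca) (by rw [hca_union_cmp]; exact hhca) hrest
      rw [rpj_union_cmp] at ih1
      rw [hpj_union_cmp] at ih2
      rw [cpj_union_cmp] at ih3
      rw [cpj_union_cmp, rpj_union_cmp, hpj_union_cmp] at ih4 ih5
      have hgS : g ∉ symd (rpj s) (hpj s) := by
        rw [mem_symd]
        push_neg
        constructor
        · intro _; exact mem_hpj.2 h2
        · intro _; exact mem_rpj.2 h1
      have hgcs : g ∉ cpj s := fun hc => h5 (mem_cpj.1 hc)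
      have hgT : g ∈ cpj (runSeq (s ∪ {LF.compare g}) t) := ih3 (Finset.mem_insert_self g _)
      obtain ⟨hcard, hset⟩ := split_not_mem hgT hgcs hgS
      refine ⟨by rw [hrun, ih1], by rw [hrun, ih2], ?_, ?_, ?_⟩
      · rw [hrun]; exact fun x hx => ih3 (Finset.mem_insert_of_mem hx)
      · rw [disCount_cons, if_neg not_dis_pred_chk3, hrun, hset, ih4]
        simp
      · rw [agrCount_cons, if_pos (agr_pred_chk3 hg), hrun, hcard, ih5]
    · -- chk4
      obtain ⟨h1, h2, -, -, h5⟩ := exec_chk4_iff.1 hea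
      rw [step_chk4] at hrest
      have hrun : runSeq s (chk4 g :: t) = runSeq (s ∪ {LF.compare g}) t := by
        rw [show runSeq s (chk4 g :: t) = runSeq (stepAct s (chk4 g)) t from rfl, step_chk4]
      obtain ⟨ih1, ih2, ih3, ih4, ih5⟩ := ih (s ∪ {LF.compare g})
        (by rw [rca_union_cmp]; exact hrca) (by rw [hca_union_cmp]; exact hhca) hrest
      rw [rpj_union_cmp] at ih1
      rw [hpj_union_cmp] at ih2
      rw [cpj_union_cmp] at ih3
      rw [cpj_union_cmp, rpj_union_cmp, hpj_union_cmp] at ih4 ih5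
      have hgS : g ∉ symd (rpj s) (hpj s) := by
        rw [mem_symd]
        push_neg
        constructor
        · intro hr; exact absurd (mem_rpj.1 hr) h1
        · intro hh; exact absurd (mem_hpj.1 hh) h2
      have hgcs : g ∉ cpj s := fun hc => h5 (mem_cpj.1 hc)
      have hgT : g ∈ cpj (runSeq (s ∪ {LF.compare g}) t) := ih3 (Finset.mem_insert_self g _)
      obtain ⟨hcard, hset⟩ := split_not_mem hgT hgcs hgS
      refine ⟨by rw [hrun, ih1], by rw [hrun, ih2], ?_, ?_, ?_⟩
      · rw [hrun]; exact fun x hx => ih3 (Finset.mem_insert_of_mem hx)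
      · rw [disCount_cons, if_neg not_dis_pred_chk4, hrun, hset, ih4]
        simp
      · rw [agrCount_cons, if_pos (agr_pred_chk4 hg), hrun, hcard, ih5]

lemma claimR (MR MH : PModel F) (c : Act (LF F) → ℕ) :
    ∀ (l : List (Act (LF F))) (s : Finset (LF F)),
      LF.robotCanAct ∈ s → LF.humanCanAct ∉ s →
      ExecFrom (compiled MR MH c) s l →
      (compiled MR MH c).goal ⊆ runSeq s l →
      ∃ ρ, ExecFrom MR (rpj s) ρ ∧ MR.goal ⊆ runSeq (rpj s) ρ ∧
        cpj s ⊆ cpj (runSeq s l) ∧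
        disCount MR l =
          ((cpj (runSeq s l) \ cpj s) ∩ symd (runSeq (rpj s) ρ) (hpj s)).card ∧
        agrCount MR l =
          ((cpj (runSeq s l) \ cpj s) \ symd (runSeq (rpj s) ρ) (hpj s)).card := by
  intro l
  induction l with
  | nil =>
    intro s _ _ _ hgoal
    refine ⟨[], trivial, (compiled_goal_subset hgoal).1, Finset.Subset.refl _, ?_, ?_⟩ <;>
      simp [disCount, agrCount, runSeq]
  | cons a t ih =>
    intro s hrca hhca hex hgoal
    obtain ⟨hmem, hea, hrest⟩ := hex
    rw [mem_compiled_actions] at hmem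
    rcases hmem with ⟨a0, ha0, rfl⟩ | ⟨a0, ha0, rfl⟩ | rfl | rfl | ⟨g, hg, rfl⟩ |
      ⟨g, hg, rfl⟩ | ⟨g, hg, rfl⟩ | ⟨g, hg, rfl⟩
    · -- liftR
      obtain ⟨-, hexa⟩ := exec_liftR_iff.1 hea
      have hrun : runSeq s (liftR a0 :: t) = runSeq (stepAct s (liftR a0)) t := rfl
      obtain ⟨ρ', e1, e2, e3, e4, e5⟩ := ih (stepAct s (liftR a0))
        ((rca_step_liftR s a0).2 hrca) (fun hc => hhca ((hca_step_liftR s a0).1 hc)) hrest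
        (by rw [← hrun]; exact hgoal)
      rw [rpj_step_liftR] at e1 e2 e4 e5
      rw [hpj_step_liftR] at e4 e5
      rw [cpj_step_liftR] at e3 e4 e5
      refine ⟨a0 :: ρ', ⟨ha0, hexa, e1⟩, ?_, ?_, ?_, ?_⟩
      · exact e2
      · rw [hrun]; exact e3
      · rw [disCount_cons, if_neg (not_dis_pred (rca_not_preNeg_liftR a0)), hrun, e4]
        simp [runSeq]
      · rw [agrCount_cons, if_neg (not_agr_pred (rca_not_preNeg_liftR a0)), hrun, e5]
        simp [runSeq]
    · exact absurd (exec_liftH_iff.1 hea).1 hhca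
    · exact absurd (exec_flipH_iff.1 hea).2 hhca
    · -- flipR
      obtain ⟨hgsub, -⟩ := exec_flipR_iff.1 hea
      have hrun : runSeq s (flipR MR :: t) = runSeq (stepAct s (flipR MR)) t := rfl
      obtain ⟨c1, c2, c3, c4, c5⟩ := claimC MR MH c t (stepAct s (flipR MR))
        (rca_step_flipR s MR) (fun hc => hhca ((hca_step_flipR s MR).1 hc)) hrest
      rw [rpj_step_flipR] at c1 c4 c5
      rw [hpj_step_flipR] at c2 c4 c5
      rw [cpj_step_flipR] at c3 c4 c5
      refine ⟨[], trivial, hgsub, ?_, ?_, ?_⟩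
      · rw [hrun]; exact c3
      · rw [disCount_cons, if_neg (not_dis_pred (rca_not_preNeg_flipR MR)), hrun, c4]
        simp [runSeq]
      · rw [agrCount_cons, if_neg (not_agr_pred (rca_not_preNeg_flipR MR)), hrun, c5]
        simp [runSeq]
    · exact absurd hrca (exec_chk1_iff.1 hea).2.2.1
    · exact absurd hrca (exec_chk2_iff.1 hea).2.2.1
    · exact absurd hrca (exec_chk3_iff.1 hea).2.2.1
    · exact absurd hrca (exec_chk4_iff.1 hea).2.2.1

lemma claimH (MR MH : PModel F) (c : Act (LF F) → ℕ) :
    ∀ (l : List (Act (LF F))) (s : Finset (LF F)),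
      LF.robotCanAct ∉ s → LF.humanCanAct ∈ s →
      ExecFrom (compiled MR MH c) s l →
      (compiled MR MH c).goal ⊆ runSeq s l →
      ∃ ρR ρH, ExecFrom MR (rpj s) ρR ∧ MR.goal ⊆ runSeq (rpj s) ρR ∧
        ExecFrom MH (hpj s) ρH ∧ MH.goal ⊆ runSeq (hpj s) ρH ∧
        cpj s ⊆ cpj (runSeq s l) ∧
        disCount MR l =
          ((cpj (runSeq s l) \ cpj s) ∩
            symd (runSeq (rpj s) ρR) (runSeq (hpj s) ρH)).card ∧
        agrCount MR l =
          ((cpj (runSeq s l) \ cpj s) \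
            symd (runSeq (rpj s) ρR) (runSeq (hpj s) ρH)).card := by
  intro l
  induction l with
  | nil =>
    intro s _ _ _ hgoal
    obtain ⟨h1, h2, -⟩ := compiled_goal_subset hgoal
    refine ⟨[], [], trivial, h1, trivial, h2, Finset.Subset.refl _, ?_, ?_⟩ <;>
      simp [disCount, agrCount, runSeq]
  | cons a t ih =>
    intro s hrca hhca hex hgoal
    obtain ⟨hmem, hea, hrest⟩ := hex
    rw [mem_compiled_actions] at hmem
    rcases hmem with ⟨a0, ha0, rfl⟩ | ⟨a0, ha0, rfl⟩ | rfl | rfl | ⟨g, hg, rfl⟩ |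
      ⟨g, hg, rfl⟩ | ⟨g, hg, rfl⟩ | ⟨g, hg, rfl⟩
    · exact absurd (exec_liftR_iff.1 hea).1 hrca
    · -- liftH
      obtain ⟨-, hexa⟩ := exec_liftH_iff.1 hea
      have hrun : runSeq s (liftH a0 :: t) = runSeq (stepAct s (liftH a0)) t := rfl
      obtain ⟨ρR, ρH', e1, e2, e3, e4, e5, e6, e7⟩ := ih (stepAct s (liftH a0))
        (fun hc => hrca ((rca_step_liftH s a0).1 hc)) ((hca_step_liftH s a0).2 hhca) hrest
        (by rw [← hrun]; exact hgoal)
      rw [hpj_step_liftH] at e3 e4 e6 e7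
      rw [rpj_step_liftH] at e1 e2 e6 e7
      rw [cpj_step_liftH] at e5 e6 e7
      refine ⟨ρR, a0 :: ρH', e1, e2, ⟨ha0, hexa, e3⟩, ?_, ?_, ?_, ?_⟩
      · exact e4
      · rw [hrun]; exact e5
      · rw [disCount_cons, if_neg (not_dis_pred (rca_not_preNeg_liftH a0)), hrun, e6]
        simp [runSeq]
      · rw [agrCount_cons, if_neg (not_agr_pred (rca_not_preNeg_liftH a0)), hrun, e7]
        simp [runSeq]
    · -- flipH
      obtain ⟨hgsub, -⟩ := exec_flipH_iff.1 hea
      have hrun : runSeq s (flipH MH :: t) = runSeq (stepAct s (flipH MH)) t := rfl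
      obtain ⟨ρR, e1, e2, e3, e4, e5⟩ := claimR MR MH c t (stepAct s (flipH MH))
        (rca_step_flipH s MH) (hca_step_flipH s MH) hrest (by rw [← hrun]; exact hgoal)
      rw [rpj_step_flipH] at e1 e2 e4 e5
      rw [hpj_step_flipH] at e4 e5
      rw [cpj_step_flipH] at e3 e4 e5
      refine ⟨ρR, [], e1, e2, trivial, hgsub, ?_, ?_, ?_⟩
      · rw [hrun]; exact e3
      · rw [disCount_cons, if_neg (not_dis_pred (rca_not_preNeg_flipH MH)), hrun, e4]
        simp [runSeq]
      · rw [agrCount_cons, if_neg (not_agr_pred (rca_not_preNeg_flipH MH)), hrun, e5]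
        simp [runSeq]
    · exact absurd (exec_flipR_iff.1 hea).2 hrca
    · exact absurd hhca (exec_chk1_iff.1 hea).2.2.2.1
    · exact absurd hhca (exec_chk2_iff.1 hea).2.2.2.1
    · exact absurd hhca (exec_chk3_iff.1 hea).2.2.2.1
    · exact absurd hhca (exec_chk4_iff.1 hea).2.2.2.1

end Claims


section Construct

variable [Fintype F]

def encH (r h : Finset F) : Finset (LF F) :=
  r.image LF.robot ∪ h.image LF.human ∪ {LF.humanCanAct}

def encR (r h : Finset F) : Finset (LF F) :=
  r.image LF.robot ∪ h.image LF.human ∪ {LF.robotCanAct}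

def encC (r h D : Finset F) : Finset (LF F) :=
  r.image LF.robot ∪ h.image LF.human ∪ D.image LF.compare

@[simp] lemma hpj_encH {r h : Finset F} : hpj (encH r h) = h := by
  ext f; simp [encH]

@[simp] lemma rpj_encR {r h : Finset F} : rpj (encR r h) = r := by
  ext f; simp [encR]

lemma encC_union_cmp (r h D : Finset F) (f : F) :
    encC r h D ∪ {LF.compare f} = encC r h (insert f D) := by
  ext x
  cases x <;> simp [encC]

lemma mem_compiled_liftH {MR MH : PModel F} {c : Act (LF F) → ℕ} {a : Act F}
    (ha : a ∈ MH.actions) : liftH a ∈ (compiled MR MH c).actions :=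
  mem_compiled_actions.2 (Or.inr (Or.inl ⟨a, ha, rfl⟩))

lemma mem_compiled_liftR {MR MH : PModel F} {c : Act (LF F) → ℕ} {a : Act F}
    (ha : a ∈ MR.actions) : liftR a ∈ (compiled MR MH c).actions :=
  mem_compiled_actions.2 (Or.inl ⟨a, ha, rfl⟩)

lemma exec_liftH_seq (MR MH : PModel F) (c : Act (LF F) → ℕ) :
    ∀ (ρ : List (Act F)) (r h : Finset F), ExecFrom MH h ρ →
      ExecFrom (compiled MR MH c) (encH r h) (ρ.map liftH) ∧
      runSeq (encH r h) (ρ.map liftH) = encH r (runSeq h ρ) := by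
  intro ρ
  induction ρ with
  | nil => intro r h _; exact ⟨trivial, rfl⟩
  | cons a t ih =>
    intro r h hex
    obtain ⟨ha, hea, hrest⟩ := hex
    have hstep : stepAct (encH r h) (liftH a) = encH r (stepAct h a) := by
      ext x
      cases x <;> simp [stepAct, liftH, encH]
    have hexec : execAct (encH r h) (liftH a) := by
      rw [exec_liftH_iff]
      exact ⟨by simp [encH], by rw [hpj_encH]; exact hea⟩
    obtain ⟨ih1, ih2⟩ := ih r (stepAct h a) hrest
    simp only [List.map]
    constructor
    · refine ⟨mem_compiled_liftH ha, hexec, ?_⟩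
      show ExecFrom _ (stepAct (encH r h) (liftH a)) _
      rw [hstep]
      exact ih1
    · show runSeq (stepAct (encH r h) (liftH a)) _ = _
      rw [hstep, ih2]
      rfl

lemma exec_liftR_seq (MR MH : PModel F) (c : Act (LF F) → ℕ) :
    ∀ (ρ : List (Act F)) (r h : Finset F), ExecFrom MR r ρ →
      ExecFrom (compiled MR MH c) (encR r h) (ρ.map liftR) ∧
      runSeq (encR r h) (ρ.map liftR) = encR (runSeq r ρ) h := by
  intro ρ
  induction ρ with
  | nil => intro r h _; exact ⟨trivial, rfl⟩
  | cons a t ih =>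
    intro r h hex
    obtain ⟨ha, hea, hrest⟩ := hex
    have hstep : stepAct (encR r h) (liftR a) = encR (stepAct r a) h := by
      ext x
      cases x <;> simp [stepAct, liftR, encR]
    have hexec : execAct (encR r h) (liftR a) := by
      rw [exec_liftR_iff]
      exact ⟨by simp [encR], by rw [rpj_encR]; exact hea⟩
    obtain ⟨ih1, ih2⟩ := ih (stepAct r a) h hrest
    simp only [List.map]
    constructor
    · refine ⟨mem_compiled_liftR ha, hexec, ?_⟩
      show ExecFrom _ (stepAct (encR r h) (liftR a)) _
      rw [hstep]
      exact ih1
    · show runSeq (stepAct (encR r h) (liftR a)) _ = _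
      rw [hstep, ih2]
      rfl

lemma exec_flipH_enc {MH : PModel F} {r h : Finset F} (hg : MH.goal ⊆ h) :
    execAct (encH r h) (flipH MH) ∧ stepAct (encH r h) (flipH MH) = encR r h := by
  constructor
  · rw [exec_flipH_iff]
    exact ⟨by rw [hpj_encH]; exact hg, by simp [encH]⟩
  · ext x
    cases x <;> simp [stepAct, flipH, encH, encR]

lemma exec_flipR_enc {MR : PModel F} {r h : Finset F} (hg : MR.goal ⊆ r) :
    execAct (encR r h) (flipR MR) ∧ stepAct (encR r h) (flipR MR) = encC r h ∅ := by
  constructor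
  · rw [exec_flipR_iff]
    exact ⟨by rw [rpj_encR]; exact hg, by simp [encR]⟩
  · ext x
    cases x <;> simp [stepAct, flipR, encR, encC]

/-- Which check action to use for fluent `f`, given final robot state `r` and human
state `h`. -/
def chkOf (r h : Finset F) (f : F) : Act (LF F) :=
  if f ∈ r then (if f ∈ h then chk3 f else chk1 f)
  else (if f ∈ h then chk2 f else chk4 f)

lemma exec_checks (MR MH : PModel F) (c : Act (LF F) → ℕ) (r h : Finset F) :
    ∀ (L : List F) (D : Finset F), L.Nodup → (∀ f ∈ L, f ∈ MR.fluents) →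
      (∀ f ∈ L, f ∉ D) →
      ExecFrom (compiled MR MH c) (encC r h D) (L.map (chkOf r h)) ∧
      runSeq (encC r h D) (L.map (chkOf r h)) = encC r h (D ∪ L.toFinset) := by
  intro L
  induction L with
  | nil =>
    intro D _ _ _
    refine ⟨trivial, ?_⟩
    simp [runSeq]
  | cons f t iht =>
    intro D hnd hfl hD
    have hD0 : f ∉ D := hD f List.mem_cons_self
    have hfl0 : f ∈ MR.fluents := hfl f List.mem_cons_self
    obtain ⟨hft, hndt⟩ := List.nodup_cons.1 hnd
    have hDt : ∀ g ∈ t, g ∉ insert f D := by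
      intro g hg hmem
      rcases Finset.mem_insert.1 hmem with rfl | hmem
      · exact hft hg
      · exact hD g (List.mem_cons_of_mem _ hg) hmem
    obtain ⟨ih1, ih2⟩ := iht (insert f D) hndt
      (fun g hg => hfl g (List.mem_cons_of_mem _ hg)) hDt
    have hmem : chkOf r h f ∈ (compiled MR MH c).actions := by
      unfold chkOf
      split_ifs <;>
        [ exact mem_compiled_actions.2
            (Or.inr (Or.inr (Or.inr (Or.inr (Or.inr (Or.inr (Or.inl ⟨f, hfl0, rfl⟩)))))));
          exact mem_compiled_actions.2
            (Or.inr (Or.inr (Or.inr (Or.inr (Or.inl ⟨f, hfl0, rfl⟩)))));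
          exact mem_compiled_actions.2
            (Or.inr (Or.inr (Or.inr (Or.inr (Or.inr (Or.inl ⟨f, hfl0, rfl⟩))))));
          exact mem_compiled_actions.2
            (Or.inr (Or.inr (Or.inr (Or.inr (Or.inr (Or.inr (Or.inr ⟨f, hfl0, rfl⟩)))))))]
    have hexec : execAct (encC r h D) (chkOf r h f) := by
      unfold chkOf
      split_ifs with h1 h2 h2
      · rw [exec_chk3_iff]
        refine ⟨by simp [encC, h1], by simp [encC, h2], by simp [encC], by simp [encC],
          by simp [encC, hD0]⟩
      · rw [exec_chk1_iff]
        refine ⟨by simp [encC, h1], by simp [encC, h2], by simp [encC], by simp [encC],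
          by simp [encC, hD0]⟩
      · rw [exec_chk2_iff]
        refine ⟨by simp [encC, h2], by simp [encC, h1], by simp [encC], by simp [encC],
          by simp [encC, hD0]⟩
      · rw [exec_chk4_iff]
        refine ⟨by simp [encC, h1], by simp [encC, h2], by simp [encC], by simp [encC],
          by simp [encC, hD0]⟩
    have hstep : stepAct (encC r h D) (chkOf r h f) = encC r h (insert f D) := by
      unfold chkOf
      split_ifs <;>
        simp only [step_chk1, step_chk2, step_chk3, step_chk4, encC_union_cmp]
    simp only [List.map]
    constructor
    · refine ⟨hmem, hexec, ?_⟩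
      show ExecFrom _ (stepAct (encC r h D) (chkOf r h f)) _
      rw [hstep]
      exact ih1
    · show runSeq (stepAct (encC r h D) (chkOf r h f)) _ = _
      rw [hstep, ih2, List.toFinset_cons, Finset.insert_union, Finset.union_insert]

lemma sum_map_eq_length {α : Type*} (g : α → ℕ) :
    ∀ (l : List α), (∀ a ∈ l, g a = 1) → (l.map g).sum = l.length := by
  intro l
  induction l with
  | nil => intro _; rfl
  | cons a t ih =>
    intro h
    simp only [List.map, List.sum_cons, List.length_cons,
      h a List.mem_cons_self, ih (fun b hb => h b (List.mem_cons_of_mem _ hb))]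
    omega

lemma cost_lower_bound (MR : PModel F) (c : Act (LF F) → ℕ) (P1 : ℕ)
    (h : ∀ f ∈ MR.fluents, c (chk3 f) = P1 ∧ c (chk4 f) = P1) :
    ∀ (l : List (Act (LF F))), P1 * agrCount MR l ≤ (l.map c).sum := by
  intro l
  induction l with
  | nil => simp [agrCount]
  | cons a t ih =>
    rw [agrCount_cons]
    by_cases hp : ∃ f ∈ MR.fluents, a = chk3 f ∨ a = chk4 f
    · rw [if_pos hp]
      obtain ⟨f, hf, rfl | rfl⟩ := hp <;>
      · simp only [List.map, List.sum_cons]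
        rw [Nat.mul_add, Nat.mul_one]
        have := (h f hf)
        omega
    · rw [if_neg hp]
      simp only [List.map, List.sum_cons, Nat.add_zero]
      omega

end Construct


section MainAux

variable [Fintype F]

lemma constructed_isPlan (MR MH : PModel F) (c : Act (LF F) → ℕ) (π1 π2 : List (Act F))
    (h1 : IsPlan MR π1) (h2 : IsPlan MH π2) :
    IsPlan (compiled MR MH c)
      (π2.map liftH ++ flipH MH :: (π1.map liftR ++ flipR MR ::
        (MR.fluents.toList.map (chkOf (runSeq MR.init π1) (runSeq MH.init π2))))) := by
  obtain ⟨e1, g1⟩ := h1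
  obtain ⟨e2, g2⟩ := h2
  have hinit : (compiled MR MH c).init = encH MR.init MH.init := rfl
  obtain ⟨A1, A2⟩ := exec_liftH_seq MR MH c π2 MR.init MH.init e2
  obtain ⟨B1, B2⟩ := exec_flipH_enc (r := MR.init) g2
  obtain ⟨C1, C2⟩ := exec_liftR_seq MR MH c π1 MR.init (runSeq MH.init π2) e1
  obtain ⟨D1, D2⟩ := exec_flipR_enc (h := runSeq MH.init π2) g1
  obtain ⟨E1, E2⟩ := exec_checks MR MH c (runSeq MR.init π1) (runSeq MH.init π2)
    MR.fluents.toList ∅ (Finset.nodup_toList _) (fun f hf => Finset.mem_toList.1 hf)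
    (fun f _ => Finset.notMem_empty f)
  have hfinal : runSeq (compiled MR MH c).init
      (π2.map liftH ++ flipH MH :: (π1.map liftR ++ flipR MR ::
        (MR.fluents.toList.map (chkOf (runSeq MR.init π1) (runSeq MH.init π2))))) =
      encC (runSeq MR.init π1) (runSeq MH.init π2) MR.fluents := by
    rw [hinit, runSeq_append, A2]
    show runSeq (stepAct _ (flipH MH)) _ = _
    rw [B2, runSeq_append, C2]
    show runSeq (stepAct _ (flipR MR)) _ = _
    rw [D2, E2, Finset.empty_union, Finset.toList_toFinset]
  constructor
  · rw [hinit, execFrom_append]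
    refine ⟨A1, ?_⟩
    rw [A2]
    refine ⟨mem_compiled_actions.2 (Or.inr (Or.inr (Or.inl rfl))), B1, ?_⟩
    show ExecFrom _ (stepAct _ (flipH MH)) _
    rw [B2, execFrom_append]
    refine ⟨C1, ?_⟩
    rw [C2]
    refine ⟨mem_compiled_actions.2 (Or.inr (Or.inr (Or.inr (Or.inl rfl)))), D1, ?_⟩
    show ExecFrom _ (stepAct _ (flipR MR)) _
    rw [D2]
    exact E1
  · rw [hfinal]
    have hgoal_eq : (compiled MR MH c).goal =
        MR.goal.image LF.robot ∪ MH.goal.image LF.human ∪ MR.fluents.image LF.compare := rfl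
    rw [hgoal_eq]
    intro x hx
    rcases Finset.mem_union.1 hx with hx | hx
    · rcases Finset.mem_union.1 hx with hx | hx
      · obtain ⟨f, hfm, rfl⟩ := Finset.mem_image.1 hx
        have : f ∈ runSeq MR.init π1 := g1 hfm
        simp [encC, this]
      · obtain ⟨f, hfm, rfl⟩ := Finset.mem_image.1 hx
        have : f ∈ runSeq MH.init π2 := g2 hfm
        simp [encC, this]
    · obtain ⟨f, hfm, rfl⟩ := Finset.mem_image.1 hx
      simp [encC, hfm]

lemma sum_ite_cost {s S : Finset F} (hS : S ⊆ s) (P1 : ℕ) :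
    (∑ f ∈ s, if f ∈ S then 0 else P1) = P1 * (s.card - S.card) := by
  have h1 : (∑ f ∈ s, if f ∈ S then 0 else P1) = ∑ f ∈ s, if f ∉ S then P1 else 0 := by
    apply Finset.sum_congr rfl
    intro f _
    by_cases hf : f ∈ S <;> simp [hf]
  rw [h1, ← Finset.sum_filter, ← Finset.sdiff_eq_filter, Finset.sum_const, smul_eq_mul,
    Finset.card_sdiff_of_subset hS, Nat.mul_comm]

lemma constructed_cost (MR MH : PModel F) (c : Act (LF F) → ℕ) (P1 : ℕ)
    (π1 π2 : List (Act F)) (h1 : IsPlan MR π1) (h2 : IsPlan MH π2)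
    (hcH : ∀ a ∈ MH.actions, c (liftH a) = 1)
    (hcR : ∀ a ∈ MR.actions, c (liftR a) = 1)
    (hcFlipH : c (flipH MH) = 0) (hcFlipR : c (flipR MR) = 0)
    (hcDis : ∀ f ∈ MR.fluents, c (chk1 f) = 0 ∧ c (chk2 f) = 0)
    (hcAgr : ∀ f ∈ MR.fluents, c (chk3 f) = P1 ∧ c (chk4 f) = P1)
    (hsub : symd (runSeq MR.init π1) (runSeq MH.init π2) ⊆ MR.fluents) :
    planCost (compiled MR MH c)
      (π2.map liftH ++ flipH MH :: (π1.map liftR ++ flipR MR ::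
        (MR.fluents.toList.map (chkOf (runSeq MR.init π1) (runSeq MH.init π2))))) =
    π2.length + π1.length +
      P1 * (MR.fluents.card - (symd (runSeq MR.init π1) (runSeq MH.init π2)).card) := by
  have hpc : ∀ l, planCost (compiled MR MH c) l = (l.map c).sum := fun _ => rfl
  rw [hpc, List.map_append, List.sum_append, List.map_cons, List.sum_cons, List.map_append,
    List.sum_append, List.map_cons, List.sum_cons, List.map_map, List.map_map, List.map_map]
  rw [sum_map_eq_length (c ∘ liftH) π2
    (fun a ha => hcH a (execFrom_mem_actions MH π2 MH.init h2.1 a ha))]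
  rw [sum_map_eq_length (c ∘ liftR) π1
    (fun a ha => hcR a (execFrom_mem_actions MR π1 MR.init h1.1 a ha))]
  rw [hcFlipH, hcFlipR]
  have hchk : (MR.fluents.toList.map
      (c ∘ chkOf (runSeq MR.init π1) (runSeq MH.init π2))).sum =
      P1 * (MR.fluents.card - (symd (runSeq MR.init π1) (runSeq MH.init π2)).card) := by
    rw [Finset.sum_map_toList]
    rw [Finset.sum_congr rfl (g := fun f =>
        if f ∈ symd (runSeq MR.init π1) (runSeq MH.init π2) then 0 else P1) ?_]
    · exact sum_ite_cost hsub P1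
    · intro f hfm
      show c (chkOf _ _ f) =
        if f ∈ symd (runSeq MR.init π1) (runSeq MH.init π2) then 0 else P1
      by_cases hr : f ∈ runSeq MR.init π1 <;> by_cases hh : f ∈ runSeq MH.init π2
      · unfold chkOf
        rw [if_pos hr, if_pos hh, if_neg (by simp [mem_symd, hr, hh])]
        exact (hcAgr f hfm).1
      · unfold chkOf
        rw [if_pos hr, if_neg hh, if_pos (mem_symd.2 (Or.inl ⟨hr, hh⟩))]
        exact (hcDis f hfm).1
      · unfold chkOf
        rw [if_neg hr, if_pos hh, if_pos (mem_symd.2 (Or.inr ⟨hh, hr⟩))]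
        exact (hcDis f hfm).2
      · unfold chkOf
        rw [if_neg hr, if_neg hh, if_neg (by simp [mem_symd, hr, hh])]
        exact (hcAgr f hfm).2
  rw [hchk]
  omega

lemma two_pow_add_bound (a b : ℕ) : 2 ^ a + 2 ^ b ≤ 2 ^ (a + b) + 1 := by
  have h1 : 1 ≤ 2 ^ a := Nat.one_le_two_pow
  have h2 : 1 ≤ 2 ^ b := Nat.one_le_two_pow
  have h3 : 2 ^ (a + b) = 2 ^ a * 2 ^ b := pow_add 2 a b
  nlinarith

end MainAux

end Prop3Aux

open Prop3Aux in
/-- Proposition 3: in the compiled model `M^λ`, give all robot and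
human-copy actions unit cost, the flip actions zero cost, each check disagreement action
cost `P2 = 0`, and each check agreement action cost `P1 > 2^{|F^R|+|F^H|}`. Then any
cost-optimal plan `π^λ` of `M^λ` satisfies `|κ⁻(π^λ)| = GD↑(M^R, M^H)`. -/
theorem prop3_gdup_via_compilation {F : Type} [DecidableEq F] [Fintype F]
    (MR MH : PModel F) (c : Act (LF F) → ℕ) (P1 : ℕ)
    (hsh : MH.fluents = MR.fluents)
    (hwfR : WellFormed MR) (hwfH : WellFormed MH)
    (hcR : ∀ a ∈ MR.actions, c (liftR a) = 1)
    (hcH : ∀ a ∈ MH.actions, c (liftH a) = 1)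
    (hcFlipH : c (flipH MH) = 0) (hcFlipR : c (flipR MR) = 0)
    (hcDis : ∀ f ∈ MR.fluents, c (chk1 f) = 0 ∧ c (chk2 f) = 0)
    (hcAgr : ∀ f ∈ MR.fluents, c (chk3 f) = P1 ∧ c (chk4 f) = P1)
    (hP1 : P1 > 2 ^ (MR.fluents.card + MH.fluents.card))
    (π : List (Act (LF F))) (hπ : IsOptimal (compiled MR MH c) π) :
    disCount MR π = GDup MR MH := by
  classical
  obtain ⟨⟨hexec, hgoal⟩, hopt⟩ := hπ
  have hrcaI : LF.robotCanAct ∉ (compiled MR MH c).init := by simp [compiled]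
  have hhcaI : LF.humanCanAct ∈ (compiled MR MH c).init := by simp [compiled]
  obtain ⟨ρR, ρH, eR, gR, eH, gH, hcsub, hdis, hagr⟩ :=
    claimH MR MH c π (compiled MR MH c).init hrcaI hhcaI hexec hgoal
  have hrpjI : rpj (compiled MR MH c).init = MR.init := by ext f; simp [compiled]
  have hhpjI : hpj (compiled MR MH c).init = MH.init := by ext f; simp [compiled]
  have hcpjI : cpj (compiled MR MH c).init = ∅ := by ext f; simp [compiled]
  rw [hrpjI] at eR gR hdis hagr
  rw [hhpjI] at eH gH hdis hagr
  rw [hcpjI, Finset.sdiff_empty] at hdis hagr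
  have hplanR : IsPlan MR ρR := ⟨eR, gR⟩
  have hplanH : IsPlan MH ρH := ⟨eH, gH⟩
  have hTflu : MR.fluents ⊆ cpj (runSeq (compiled MR MH c).init π) :=
    (compiled_goal_subset hgoal).2.2
  have hrf_sub : runSeq MR.init ρR ⊆ MR.fluents :=
    runSeq_subset MR hwfR ρR MR.init eR hwfR.1
  have hhf_sub : runSeq MH.init ρH ⊆ MR.fluents := by
    rw [← hsh]; exact runSeq_subset MH hwfH ρH MH.init eH hwfH.1
  have hS_sub : symd (runSeq MR.init ρR) (runSeq MH.init ρH) ⊆ MR.fluents := by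
    intro f hfm
    rcases mem_symd.1 hfm with ⟨h, -⟩ | ⟨h, -⟩
    · exact hrf_sub h
    · exact hhf_sub h
  have hS_T : symd (runSeq MR.init ρR) (runSeq MH.init ρH) ⊆
      cpj (runSeq (compiled MR MH c).init π) := hS_sub.trans hTflu
  rw [Finset.inter_eq_right.2 hS_T] at hdis
  have hmemD : (symd (runSeq MR.init ρR) (runSeq MH.init ρH)).card ∈ gsdVals MR MH :=
    ⟨ρR, ρH, hplanR, hplanH, rfl⟩
  have hbdd : BddAbove (gsdVals MR MH) := by
    refine ⟨MR.fluents.card, ?_⟩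
    rintro n ⟨p1, p2, hp1, hp2, rfl⟩
    refine Finset.card_le_card ?_
    intro f hfm
    rcases Finset.mem_union.1 hfm with hf | hf
    · exact runSeq_subset MR hwfR p1 MR.init hp1.1 hwfR.1 (Finset.mem_sdiff.1 hf).1
    · rw [← hsh]
      exact runSeq_subset MH hwfH p2 MH.init hp2.1 hwfH.1 (Finset.mem_sdiff.1 hf).1
  rw [hdis]
  by_contra hne
  have hlt : (symd (runSeq MR.init ρR) (runSeq MH.init ρH)).card < GDup MR MH :=
    lt_of_le_of_ne (le_csSup hbdd hmemD) hne
  obtain ⟨σ1, σ2, hσ1, hσ2, hG0⟩ := Nat.sSup_mem ⟨_, hmemD⟩ hbdd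
  have hG : GDup MR MH = (GSD MR MH σ1 σ2).card := hG0
  obtain ⟨σ1', e1', r1', len1⟩ := shorten_exec MR hwfR σ1.length σ1 MR.init le_rfl hσ1.1 hwfR.1
  obtain ⟨σ2', e2', r2', len2⟩ := shorten_exec MH hwfH σ2.length σ2 MH.init le_rfl hσ2.1 hwfH.1
  have hplan1' : IsPlan MR σ1' := ⟨e1', by rw [r1']; exact hσ1.2⟩
  have hplan2' : IsPlan MH σ2' := ⟨e2', by rw [r2']; exact hσ2.2⟩
  have hsymd' : symd (runSeq MR.init σ1') (runSeq MH.init σ2') = GSD MR MH σ1 σ2 := by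
    rw [r1', r2']; rfl
  have hsub' : symd (runSeq MR.init σ1') (runSeq MH.init σ2') ⊆ MR.fluents := by
    intro f hfm
    rcases mem_symd.1 hfm with ⟨h, -⟩ | ⟨h, -⟩
    · exact runSeq_subset MR hwfR σ1' MR.init e1' hwfR.1 h
    · rw [← hsh]; exact runSeq_subset MH hwfH σ2' MH.init e2' hwfH.1 h
  have hGle : GDup MR MH ≤ MR.fluents.card := by
    rw [hG, ← hsymd']
    exact Finset.card_le_card hsub'
  have hplanL := constructed_isPlan MR MH c σ1' σ2' hplan1' hplan2'
  have hcostL := constructed_cost MR MH c P1 σ1' σ2' hplan1' hplan2' hcH hcR hcFlipH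
    hcFlipR hcDis hcAgr hsub'
  have hle := hopt _ hplanL
  rw [hcostL] at hle
  have hGcard : (symd (runSeq MR.init σ1') (runSeq MH.init σ2')).card = GDup MR MH := by
    rw [hsymd', ← hG]
  rw [hGcard] at hle
  have hlow : P1 * (MR.fluents.card - (symd (runSeq MR.init ρR) (runSeq MH.init ρH)).card)
      ≤ planCost (compiled MR MH c) π := by
    have h1 := cost_lower_bound MR c P1 hcAgr π
    have h2 : MR.fluents.card - (symd (runSeq MR.init ρR) (runSeq MH.init ρH)).card ≤
        agrCount MR π := by
      rw [hagr]
      have hsub2 : MR.fluents \ symd (runSeq MR.init ρR) (runSeq MH.init ρH) ⊆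
          cpj (runSeq (compiled MR MH c).init π) \
            symd (runSeq MR.init ρR) (runSeq MH.init ρH) := fun f hf =>
        Finset.mem_sdiff.2 ⟨hTflu (Finset.mem_sdiff.1 hf).1, (Finset.mem_sdiff.1 hf).2⟩
      calc MR.fluents.card - (symd (runSeq MR.init ρR) (runSeq MH.init ρH)).card
          = (MR.fluents \ symd (runSeq MR.init ρR) (runSeq MH.init ρH)).card :=
            (Finset.card_sdiff_of_subset hS_sub).symm
        _ ≤ _ := Finset.card_le_card hsub2
    calc P1 * (MR.fluents.card - (symd (runSeq MR.init ρR) (runSeq MH.init ρH)).card)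
        ≤ P1 * agrCount MR π := Nat.mul_le_mul_left _ h2
      _ ≤ (π.map c).sum := h1
      _ = planCost (compiled MR MH c) π := rfl
  have hkey : P1 * (MR.fluents.card - (symd (runSeq MR.init ρR) (runSeq MH.init ρH)).card)
      ≤ σ2'.length + σ1'.length + P1 * (MR.fluents.card - GDup MR MH) :=
    le_trans hlow hle
  have hsplit : (MR.fluents.card - GDup MR MH) + 1 ≤
      MR.fluents.card - (symd (runSeq MR.init ρR) (runSeq MH.init ρH)).card := by omega
  have hmul : P1 * (MR.fluents.card - GDup MR MH) + P1 ≤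
      P1 * (MR.fluents.card - (symd (runSeq MR.init ρR) (runSeq MH.init ρH)).card) := by
    calc P1 * (MR.fluents.card - GDup MR MH) + P1
        = P1 * ((MR.fluents.card - GDup MR MH) + 1) := by ring
      _ ≤ _ := Nat.mul_le_mul_left _ hsplit
  have hP1le : P1 ≤ σ2'.length + σ1'.length := by
    have h6 : P1 * (MR.fluents.card - GDup MR MH) + P1 ≤
        P1 * (MR.fluents.card - GDup MR MH) + (σ2'.length + σ1'.length) := by
      calc P1 * (MR.fluents.card - GDup MR MH) + P1
          ≤ σ2'.length + σ1'.length + P1 * (MR.fluents.card - GDup MR MH) :=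
            le_trans hmul hkey
        _ = P1 * (MR.fluents.card - GDup MR MH) + (σ2'.length + σ1'.length) := by ring
    exact Nat.le_of_add_le_add_left h6
  have hbound := two_pow_add_bound MR.fluents.card MH.fluents.card
  set A := 2 ^ MR.fluents.card with hA
  set B := 2 ^ MH.fluents.card with hB
  set C2 := 2 ^ (MR.fluents.card + MH.fluents.card) with hC
  omega
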